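/- Let G be a graph with minimum degree δ(G) ≥ 1. Then γ_SMB'(G) = 2 if and only if G has a strong support vertex. -/

import Mathlib

/-!
Formalization of the Maker-Breaker domination game (MBD game).

In the MBD game on a graph `G`, Dominator and Staller alternately select
previously unplayed vertices.  Dominator wins when the set of vertices he has
selected is a dominating set of `G`; Staller wins when she has selected a
vertex of every dominating set of `G`, which happens exactly when the closed
neighbourhood of some vertex is entirely contained in her set of selected
vertices.
-/

/-- `D` is a dominating set of `G` (as a finset of vertices). -/
def IsDomSet {V : Type*} (G : SimpleGraph V) (D : Finset V) : Prop :=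
  ∀ v, v ∈ D ∨ ∃ u ∈ D, G.Adj u v

/-- Staller (whose selected vertices form `S`) has won: she owns the whole
closed neighbourhood of some vertex, hence a vertex of every dominating set. -/
def StallerWon {V : Type*} (G : SimpleGraph V) (S : Finset V) : Prop :=
  ∃ v, v ∈ S ∧ ∀ u, G.Adj v u → u ∈ S

section Game

variable {V : Type*} [DecidableEq V]

mutual
  /-- Position with Dominator's vertices `D`, Staller's vertices `S` and
  Dominator to move: Dominator can guarantee to complete a dominating set
  using at most `k` further moves of his own. -/
  inductive DomWinD (G : SimpleGraph V) : Finset V → Finset V → ℕ → Prop where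
    | done (D S : Finset V) (k : ℕ) : IsDomSet G D → DomWinD G D S k
    | step (D S : Finset V) (k : ℕ) (v : V) : v ∉ D → v ∉ S →
        DomWinS G (insert v D) S k → DomWinD G D S (k + 1)

  /-- Position with Dominator's vertices `D`, Staller's vertices `S` and
  Staller to move: Dominator can guarantee to complete a dominating set
  using at most `k` further moves of his own. -/
  inductive DomWinS (G : SimpleGraph V) : Finset V → Finset V → ℕ → Prop where
    | done (D S : Finset V) (k : ℕ) : IsDomSet G D → DomWinS G D S k
    | step (D S : Finset V) (k : ℕ) : (∃ w, w ∉ D ∧ w ∉ S) →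
        (∀ w, w ∉ D → w ∉ S → DomWinD G D (insert w S) k) → DomWinS G D S k
end

mutual
  /-- Position with Dominator's vertices `D`, Staller's vertices `S` and
  Staller to move: Staller can guarantee to claim a whole closed neighbourhood
  using at most `k` further moves of her own. -/
  inductive StalWinS (G : SimpleGraph V) : Finset V → Finset V → ℕ → Prop where
    | done (D S : Finset V) (k : ℕ) : StallerWon G S → StalWinS G D S k
    | step (D S : Finset V) (k : ℕ) (w : V) : w ∉ D → w ∉ S →
        StalWinD G D (insert w S) k → StalWinS G D S (k + 1)

  /-- Position with Dominator's vertices `D`, Staller's vertices `S` and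
  Dominator to move: Staller can guarantee to claim a whole closed
  neighbourhood using at most `k` further moves of her own. -/
  inductive StalWinD (G : SimpleGraph V) : Finset V → Finset V → ℕ → Prop where
    | done (D S : Finset V) (k : ℕ) : StallerWon G S → StalWinD G D S k
    | step (D S : Finset V) (k : ℕ) : (∃ v, v ∉ D ∧ v ∉ S) →
        (∀ v, v ∉ D → v ∉ S → StalWinS G (insert v D) S k) → StalWinD G D S k
end

/-- `γ_MB(G)`: minimum number of Dominator's moves with which he can guarantee
to win the D-game (Dominator moves first); `⊤` if he cannot win it. -/
noncomputable def gammaMB (G : SimpleGraph V) : ℕ∞ :=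
  sInf {k : ℕ∞ | ∃ n : ℕ, k = n ∧ DomWinD G ∅ ∅ n}

/-- `γ_MB'(G)`: minimum number of Dominator's moves with which he can guarantee
to win the S-game (Staller moves first); `⊤` if he cannot win it. -/
noncomputable def gammaMB' (G : SimpleGraph V) : ℕ∞ :=
  sInf {k : ℕ∞ | ∃ n : ℕ, k = n ∧ DomWinS G ∅ ∅ n}

/-- `γ_SMB(G)`: minimum number of Staller's moves with which she can guarantee
to win the D-game (Dominator moves first); `⊤` if she cannot win it. -/
noncomputable def gammaSMB (G : SimpleGraph V) : ℕ∞ :=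
  sInf {k : ℕ∞ | ∃ n : ℕ, k = n ∧ StalWinD G ∅ ∅ n}

/-- `γ_SMB'(G)`: minimum number of Staller's moves with which she can guarantee
to win the S-game (Staller moves first); `⊤` if she cannot win it. -/
noncomputable def gammaSMB' (G : SimpleGraph V) : ℕ∞ :=
  sInf {k : ℕ∞ | ∃ n : ℕ, k = n ∧ StalWinS G ∅ ∅ n}

/-- Outcome `𝒟`: Dominator has a winning strategy no matter who starts. -/
def OutcomeD (G : SimpleGraph V) : Prop :=
  (∃ n, DomWinD G ∅ ∅ n) ∧ (∃ n, DomWinS G ∅ ∅ n)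

/-- Outcome `𝒮`: Staller has a winning strategy no matter who starts. -/
def OutcomeS (G : SimpleGraph V) : Prop :=
  (∃ n, StalWinD G ∅ ∅ n) ∧ (∃ n, StalWinS G ∅ ∅ n)

/-- Outcome `𝒩`: the first player has a winning strategy. -/
def OutcomeN (G : SimpleGraph V) : Prop :=
  (∃ n, DomWinD G ∅ ∅ n) ∧ (∃ n, StalWinS G ∅ ∅ n)

end Game

/-- The corona product `G ⊙ H`: one copy of `G`, a copy of `H` for every
vertex of `G`, and the `i`-th vertex of `G` joined to every vertex of the
`i`-th copy of `H`. -/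
def coronaProd {α β : Type*} (G : SimpleGraph α) (H : SimpleGraph β) :
    SimpleGraph (α ⊕ α × β) where
  Adj x y :=
    match x, y with
    | Sum.inl a, Sum.inl a' => G.Adj a a'
    | Sum.inl a, Sum.inr p => a = p.1
    | Sum.inr p, Sum.inl a => a = p.1
    | Sum.inr p, Sum.inr q => p.1 = q.1 ∧ H.Adj p.2 q.2
  symm := by
    constructor
    rintro (a | p) (a' | q) h
    · exact G.adj_symm h
    · exact h
    · exact h
    · exact ⟨h.1.symm, H.adj_symm h.2⟩
  loopless := by
    constructor
    rintro (a | p) h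
    · exact G.irrefl h
    · exact H.irrefl h.2

/-- The domination number `γ(G)` of a finite graph. -/
noncomputable def domNumber {V : Type*} [Fintype V] (G : SimpleGraph V) : ℕ :=
  sInf {n : ℕ | ∃ D : Finset V, D.card = n ∧ IsDomSet G D}

/-- `v` is a dominating vertex: it is adjacent to all other vertices. -/
def IsDomVertex {V : Type*} (G : SimpleGraph V) (v : V) : Prop :=
  ∀ u, u ≠ v → G.Adj v u

/-- `v` is an isolated vertex (degree `0`). -/
def IsIsolatedVertex {V : Type*} (G : SimpleGraph V) (v : V) : Prop :=
  ∀ u, ¬ G.Adj v u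

/-- `v` is a leaf (degree `1`). -/
def IsLeaf {V : Type*} (G : SimpleGraph V) (v : V) : Prop :=
  ∃! u, G.Adj v u

/-- `v` is a strong support vertex: adjacent to at least two leaves. -/
def IsStrongSupport {V : Type*} (G : SimpleGraph V) (v : V) : Prop :=
  ∃ u w, u ≠ w ∧ G.Adj v u ∧ G.Adj v w ∧ IsLeaf G u ∧ IsLeaf G w

section Aux
set_option linter.unusedSectionVars false

variable {V : Type*} [DecidableEq V] {G : SimpleGraph V}

lemma aux_not_won_empty : ¬ StallerWon G (∅ : Finset V) := by
  rintro ⟨v, hv, -⟩; simp at hv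

lemma aux_not_won_singleton (hdelta : ∀ v, ∃ u, G.Adj v u) (w : V) :
    ¬ StallerWon G (insert w (∅ : Finset V)) := by
  rintro ⟨x, hx, hnb⟩
  simp only [Finset.mem_insert, Finset.notMem_empty, or_false] at hx
  subst hx
  obtain ⟨u, hu⟩ := hdelta x
  have hmem := hnb u hu
  simp only [Finset.mem_insert, Finset.notMem_empty, or_false] at hmem
  subst hmem
  exact G.loopless.irrefl _ hu

lemma aux_stalWinS_zero {D S : Finset V} (h : StalWinS G D S 0) : StallerWon G S := by
  cases h with
  | done _ _ _ h => exact h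

lemma aux_stalWinD_zero {D S : Finset V} (h : StalWinD G D S 0) : StallerWon G S := by
  cases h with
  | done _ _ _ h => exact h
  | step _ _ _ hex hall =>
      obtain ⟨v, hv1, hv2⟩ := hex
      exact aux_stalWinS_zero (hall v hv1 hv2)

lemma aux_leaf_unique {u v : V} (hl : IsLeaf G u) (h : G.Adj u v) :
    ∀ x, G.Adj u x → x = v := by
  obtain ⟨t, _, hu⟩ := hl
  intro x hx
  rw [hu x hx, hu v h]

lemma aux_won_pair (hdelta : ∀ v, ∃ u, G.Adj v u) {w1 w2 : V}
    (h : StallerWon G (insert w2 (insert w1 (∅ : Finset V)))) :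
    (IsLeaf G w1 ∧ G.Adj w1 w2) ∨ (IsLeaf G w2 ∧ G.Adj w2 w1) := by
  obtain ⟨x, hx, hnb⟩ := h
  simp only [Finset.mem_insert, Finset.notMem_empty, or_false] at hx
  have hsub : ∀ u, G.Adj x u → u = w2 ∨ u = w1 := by
    intro u hu
    have := hnb u hu
    simpa using this
  obtain ⟨u0, hu0⟩ := hdelta x
  rcases hx with h | h
  · -- x = w2
    subst h
    right
    have hadj : G.Adj x w1 := by
      rcases hsub u0 hu0 with rfl | rfl
      · exact absurd hu0 (G.loopless.irrefl _)
      · exact hu0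
    refine ⟨⟨w1, hadj, ?_⟩, hadj⟩
    intro y hy
    rcases hsub y hy with rfl | rfl
    · exact absurd hy (G.loopless.irrefl _)
    · rfl
  · -- x = w1
    subst h
    left
    have hadj : G.Adj x w2 := by
      rcases hsub u0 hu0 with rfl | rfl
      · exact hu0
      · exact absurd hu0 (G.loopless.irrefl _)
    refine ⟨⟨w2, hadj, ?_⟩, hadj⟩
    intro y hy
    rcases hsub y hy with rfl | rfl
    · rfl
    · exact absurd hy (G.loopless.irrefl _)

/-- If `ℓ` is a leaf adjacent to `v`, then Staller owning `{ℓ, v}` wins. -/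
lemma aux_won_leaf {v ℓ : V} (hl : IsLeaf G ℓ) (hadj : G.Adj v ℓ) :
    StallerWon G (insert ℓ (insert v (∅ : Finset V))) := by
  refine ⟨ℓ, Finset.mem_insert_self _ _, ?_⟩
  intro t ht
  have : t = v := aux_leaf_unique hl hadj.symm t ht
  subst this
  exact Finset.mem_insert_of_mem (Finset.mem_insert_self _ _)

lemma aux_stalwins_two_of_strong {v : V} (h : IsStrongSupport G v) :
    StalWinS G ∅ ∅ 2 := by
  obtain ⟨u, w, huw, hvu, hvw, hlu, hlw⟩ := h
  refine StalWinS.step ∅ ∅ 1 v (Finset.notMem_empty v) (Finset.notMem_empty v) ?_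
  refine StalWinD.step ∅ (insert v ∅) 1
    ⟨u, Finset.notMem_empty u, by simp [hvu.ne']⟩ ?_
  intro x _ hx2
  have hxv : x ≠ v := by simpa using hx2
  by_cases hxu : x = u
  · subst hxu
    refine StalWinS.step _ _ 0 w (by simp [Ne.symm huw]) (by simp [hvw.ne']) ?_
    exact StalWinD.done _ _ _ (aux_won_leaf hlw hvw)
  · refine StalWinS.step _ _ 0 u (by simp [Ne.symm hxu]) (by simp [hvu.ne']) ?_
    exact StalWinD.done _ _ _ (aux_won_leaf hlu hvu)

lemma aux_strong_of_stalwins_two (hdelta : ∀ v, ∃ u, G.Adj v u)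
    (h : StalWinS G ∅ ∅ 2) : ∃ v, IsStrongSupport G v := by
  cases h with
  | done _ _ _ hwon => exact absurd hwon aux_not_won_empty
  | step _ _ _ w1 hw1D hw1S hD =>
    cases hD with
    | done _ _ _ hwon => exact absurd hwon (aux_not_won_singleton hdelta w1)
    | step _ _ _ hex hall =>
      obtain ⟨v0, _, hv0S⟩ := hex
      -- key extraction
      have key : ∀ v : V, v ≠ w1 → ∃ w2, w2 ≠ v ∧ w2 ≠ w1 ∧
          ((IsLeaf G w1 ∧ G.Adj w1 w2) ∨ (IsLeaf G w2 ∧ G.Adj w2 w1)) := by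
        intro v hv
        have hS := hall v (Finset.notMem_empty v) (by simp [hv])
        cases hS with
        | done _ _ _ hwon => exact absurd hwon (aux_not_won_singleton hdelta w1)
        | step _ _ _ w2 hw2D hw2S hD0 =>
          have hwon := aux_stalWinD_zero hD0
          refine ⟨w2, ?_, ?_, aux_won_pair hdelta hwon⟩
          · simpa using hw2D
          · simpa using hw2S
      -- w1 is not a leaf
      have hnl : ¬ IsLeaf G w1 := by
        rintro hleaf
        obtain ⟨u, hu, huniq⟩ := hleaf
        obtain ⟨w2, hw2v, hw2w1, hcase⟩ := key u (fun e => G.loopless.irrefl w1 (e ▸ hu))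
        rcases hcase with ⟨_, hadj⟩ | ⟨hl2, hadj⟩
        · exact hw2v (huniq w2 hadj)
        · exact hw2v (huniq w2 hadj.symm)
      have hv0w1 : v0 ≠ w1 := by simpa using hv0S
      obtain ⟨u1, _, hu1w1, hcase1⟩ := key v0 hv0w1
      rcases hcase1 with ⟨hl, _⟩ | ⟨hl1, hadj1⟩
      · exact absurd hl hnl
      obtain ⟨u2, hu2u1, hu2w1, hcase2⟩ := key u1 hu1w1
      rcases hcase2 with ⟨hl, _⟩ | ⟨hl2, hadj2⟩
      · exact absurd hl hnl
      exact ⟨w1, u1, u2, Ne.symm hu2u1, hadj1.symm, hadj2.symm, hl1, hl2⟩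

lemma aux_not_stalwins_zero (h : StalWinS G ∅ ∅ 0) : False :=
  aux_not_won_empty (aux_stalWinS_zero h)

lemma aux_not_stalwins_one (hdelta : ∀ v, ∃ u, G.Adj v u)
    (h : StalWinS G ∅ ∅ 1) : False := by
  cases h with
  | done _ _ _ hwon => exact aux_not_won_empty hwon
  | step _ _ _ w hwD hwS hD =>
    exact aux_not_won_singleton hdelta w (aux_stalWinD_zero hD)

end Aux

/-- Let `G` be a graph with `δ(G) ≥ 1`.  Then `γ_SMB'(G) = 2` if and only if
`G` has a strong support vertex. -/
theorem gammaSMB'_eq_two_iff {V : Type*} [Fintype V] [DecidableEq V]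
    (G : SimpleGraph V) (hdelta : ∀ v, ∃ u, G.Adj v u) :
    gammaSMB' G = 2 ↔ ∃ v, IsStrongSupport G v := by
  have h2le : ∀ n : ℕ, StalWinS G ∅ ∅ n → 2 ≤ n := by
    intro n hn
    match n, hn with
    | 0, hn => exact absurd hn (fun h => aux_not_stalwins_zero h)
    | 1, hn => exact absurd hn (fun h => aux_not_stalwins_one hdelta h)
    | (m + 2), _ => omega
  constructor
  · intro h
    unfold gammaSMB' at h
    have hne : {k : ℕ∞ | ∃ n : ℕ, k = n ∧ StalWinS G ∅ ∅ n}.Nonempty := by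
      by_contra hcon
      rw [Set.not_nonempty_iff_eq_empty] at hcon
      rw [hcon, sInf_empty] at h
      exact (by simp : (⊤ : ℕ∞) ≠ 2) h
    obtain ⟨k, n, rfl, hn⟩ := hne
    set N : Set ℕ := {n : ℕ | StalWinS G ∅ ∅ n} with hN
    have hNne : N.Nonempty := ⟨n, hn⟩
    have hmem : sInf N ∈ N := Nat.sInf_mem hNne
    have heq : sInf {k : ℕ∞ | ∃ n : ℕ, k = n ∧ StalWinS G ∅ ∅ n} = ((sInf N : ℕ) : ℕ∞) := by
      apply le_antisymm
      · exact sInf_le ⟨sInf N, rfl, hmem⟩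
      · apply le_sInf
        rintro k ⟨m, rfl, hm⟩
        exact_mod_cast Nat.sInf_le hm
    rw [heq] at h
    have : sInf N = 2 := by exact_mod_cast h
    rw [this] at hmem
    exact aux_strong_of_stalwins_two hdelta hmem
  · rintro ⟨v, hv⟩
    have h2 := aux_stalwins_two_of_strong (G := G) hv
    unfold gammaSMB'
    apply le_antisymm
    · exact sInf_le ⟨2, by norm_num, h2⟩
    · apply le_sInf
      rintro k ⟨m, rfl, hm⟩
      exact_mod_cast h2le m hm
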